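/- Let G ≤ S_n be a transitive permutation group generated by a transitive normal subgroup N and a transitive cyclic subgroup ⟨τ⟩ (so τ is an n-cycle). Then N ∩ ⟨τ⟩ has order at least 2; in particular the extension G = N⟨τ⟩ cannot be split with N ∩ ⟨τ⟩ = {1}. -/
import Mathlib


/-- Theorem (group), part (i): if `G ≤ S_n` is generated by a transitive normal subgroup `N`
and an `n`-cycle `τ`, then `N ∩ ⟨τ⟩` has order at least 2, i.e. contains a nontrivial element;
in particular the extension cannot split with trivial intersection. -/
theorem stmt3 (n : ℕ) (G N : Subgroup (Equiv.Perm (Fin n)))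
    (hNG : N ≤ G)
    (hnormal : ∀ g ∈ G, ∀ x ∈ N, g * x * g⁻¹ ∈ N)
    (hNtrans : ∀ x y : Fin n, ∃ g ∈ N, g x = y)
    (τ : Equiv.Perm (Fin n)) (hτG : τ ∈ G)
    (hcyc : τ.IsCycle) (hsupp : τ.support = Finset.univ)
    (hgen : ∀ g ∈ G, ∃ x ∈ N, ∃ k : ℤ, g = x * τ ^ k) :
    ∃ x : Equiv.Perm (Fin n), x ∈ N ∧ x ∈ Subgroup.zpowers τ ∧ x ≠ 1 := by
  classical
  by_contra hcon
  push_neg at hcon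
  -- `hcon : ∀ x, x ∈ N → x ∈ zpowers τ → x = 1`
  -- τ is fixed-point free
  have fpf : ∀ a : Fin n, τ a ≠ a := by
    intro a
    have ha : a ∈ τ.support := by rw [hsupp]; exact Finset.mem_univ a
    exact Equiv.Perm.mem_support.mp ha
  obtain ⟨w, hw, hsame⟩ := hcyc
  -- centralizer of τ is ⟨τ⟩
  have hcent : ∀ z : Equiv.Perm (Fin n), z * τ = τ * z → z ∈ Subgroup.zpowers τ := by
    intro z hz
    have hzc : Commute z τ := hz
    obtain ⟨i, hi⟩ := hsame (fpf (z w))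
    -- hi : (τ ^ i) w = z w
    have hzi : z = τ ^ i := by
      apply Equiv.ext
      intro b
      obtain ⟨j, hj⟩ := hsame (fpf b)
      -- hj : (τ ^ j) w = b
      calc z b = z ((τ ^ j) w) := by rw [hj]
        _ = (z * τ ^ j) w := by rw [Equiv.Perm.mul_apply]
        _ = (τ ^ j * z) w := by rw [(hzc.zpow_right j).eq]
        _ = (τ ^ j) (z w) := by rw [Equiv.Perm.mul_apply]
        _ = (τ ^ j) ((τ ^ i) w) := by rw [hi]
        _ = (τ ^ (j + i)) w := by rw [zpow_add, Equiv.Perm.mul_apply]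
        _ = (τ ^ (i + j)) w := by rw [add_comm]
        _ = (τ ^ i) ((τ ^ j) w) := by rw [zpow_add, Equiv.Perm.mul_apply]
        _ = (τ ^ i) b := by rw [hj]
    exact Subgroup.mem_zpowers_iff.mpr ⟨i, hzi.symm⟩
  -- the twisted map y ↦ y⁻¹ * (τ * y * τ⁻¹) on N
  set F : N → N := fun y =>
    ⟨(y : Equiv.Perm (Fin n))⁻¹ * (τ * (y : Equiv.Perm (Fin n)) * τ⁻¹),
      N.mul_mem (N.inv_mem y.2) (hnormal τ hτG _ y.2)⟩ with hF
  have hFinj : Function.Injective F := by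
    intro y₁ y₂ h
    have h' : (y₁ : Equiv.Perm (Fin n))⁻¹ * (τ * (y₁ : Equiv.Perm (Fin n)) * τ⁻¹)
        = (y₂ : Equiv.Perm (Fin n))⁻¹ * (τ * (y₂ : Equiv.Perm (Fin n)) * τ⁻¹) :=
      Subtype.ext_iff.mp h
    have h'' : (y₁ : Equiv.Perm (Fin n))⁻¹ * τ * (y₁ : Equiv.Perm (Fin n))
        = (y₂ : Equiv.Perm (Fin n))⁻¹ * τ * (y₂ : Equiv.Perm (Fin n)) := by
      have h3 : ((y₁ : Equiv.Perm (Fin n))⁻¹ * τ * (y₁ : Equiv.Perm (Fin n))) * τ⁻¹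
          = ((y₂ : Equiv.Perm (Fin n))⁻¹ * τ * (y₂ : Equiv.Perm (Fin n))) * τ⁻¹ := by
        calc ((y₁ : Equiv.Perm (Fin n))⁻¹ * τ * (y₁ : Equiv.Perm (Fin n))) * τ⁻¹
            = (y₁ : Equiv.Perm (Fin n))⁻¹ * (τ * (y₁ : Equiv.Perm (Fin n)) * τ⁻¹) := by
              group
          _ = (y₂ : Equiv.Perm (Fin n))⁻¹ * (τ * (y₂ : Equiv.Perm (Fin n)) * τ⁻¹) := h'
          _ = ((y₂ : Equiv.Perm (Fin n))⁻¹ * τ * (y₂ : Equiv.Perm (Fin n))) * τ⁻¹ := by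
              group
      exact mul_right_cancel h3
    -- z := y₂ * y₁⁻¹ commutes with τ
    set z : Equiv.Perm (Fin n) := (y₂ : Equiv.Perm (Fin n)) * (y₁ : Equiv.Perm (Fin n))⁻¹
      with hzdef
    have hzcomm : z * τ = τ * z := by
      calc z * τ
          = (y₂ : Equiv.Perm (Fin n))
              * ((y₁ : Equiv.Perm (Fin n))⁻¹ * τ * (y₁ : Equiv.Perm (Fin n)))
              * (y₁ : Equiv.Perm (Fin n))⁻¹ := by rw [hzdef]; group
        _ = (y₂ : Equiv.Perm (Fin n))
              * ((y₂ : Equiv.Perm (Fin n))⁻¹ * τ * (y₂ : Equiv.Perm (Fin n)))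
              * (y₁ : Equiv.Perm (Fin n))⁻¹ := by rw [h'']
        _ = τ * z := by rw [hzdef]; group
    have hzN : z ∈ N := N.mul_mem y₂.2 (N.inv_mem y₁.2)
    have hz1 : z = 1 := hcon z hzN (hcent z hzcomm)
    have : (y₂ : Equiv.Perm (Fin n)) = (y₁ : Equiv.Perm (Fin n)) := by
      have := mul_inv_eq_one.mp (hzdef ▸ hz1)
      exact this
    exact (Subtype.ext this).symm
  have hFsurj : Function.Surjective F := Finite.injective_iff_surjective.mp hFinj
  -- transporter: x ∈ N with x (τ w) = w, so x * τ fixes w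
  obtain ⟨x, hxN, hxw⟩ := hNtrans (τ w) w
  obtain ⟨y, hy⟩ := hFsurj ⟨x, hxN⟩
  have hy' : (y : Equiv.Perm (Fin n))⁻¹ * (τ * (y : Equiv.Perm (Fin n)) * τ⁻¹) = x :=
    Subtype.ext_iff.mp hy
  have hyy : (y : Equiv.Perm (Fin n))⁻¹ * τ * (y : Equiv.Perm (Fin n)) = x * τ := by
    calc (y : Equiv.Perm (Fin n))⁻¹ * τ * (y : Equiv.Perm (Fin n))
        = ((y : Equiv.Perm (Fin n))⁻¹ * (τ * (y : Equiv.Perm (Fin n)) * τ⁻¹)) * τ := by group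
      _ = x * τ := by rw [hy']
  -- evaluate at w : the conjugate of τ fixes w, so τ fixes y w — contradiction
  have hfix : ((y : Equiv.Perm (Fin n))⁻¹ * τ * (y : Equiv.Perm (Fin n))) w = w := by
    rw [hyy]
    show x (τ w) = w
    exact hxw
  have hτfix : τ ((y : Equiv.Perm (Fin n)) w) = (y : Equiv.Perm (Fin n)) w := by
    have h5 : (y : Equiv.Perm (Fin n))⁻¹ (τ ((y : Equiv.Perm (Fin n)) w)) = w := by
      simpa [Equiv.Perm.mul_apply] using hfix
    have := congrArg (y : Equiv.Perm (Fin n)) h5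
    simpa using this
  exact fpf _ hτfix
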